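/- (Theorem 1, uniqueness part.) Let Φ₁ ∈ ℂ^{D×M} and let F ∈ ℂ^{M×L} be a matrix whose row support Ξ has cardinality S, and set D̃ = Φ₁ F. If 2S < spark(Φ₁) − 1 + rank(D̃), then F is the unique solution of the multiple-measurement-vectors problem with common support: for every matrix X ∈ ℂ^{M×L} satisfying Φ₁ X = D̃ and having at most S nonzero rows, X = F. -/

import Mathlib

/-- The spark of a matrix `Φ`: the smallest cardinality of a (necessarily nonempty)
set of columns of `Φ` that is linearly dependent. -/
noncomputable def spark {D M : ℕ} (Φ : Matrix (Fin D) (Fin M) ℂ) : ℕ :=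
  sInf {n | ∃ s : Finset (Fin M), s.card = n ∧
    ¬ LinearIndependent ℂ (fun j : s => (fun i => Φ i (j : Fin M)))}

open Module Matrix

lemma spark_le_of_kernel {D M : ℕ} (Φ : Matrix (Fin D) (Fin M) ℂ) (c : Fin M → ℂ)
    [DecidablePred fun j => c j ≠ 0]
    (hc : c ≠ 0) (h : Φ.mulVec c = 0) :
    spark Φ ≤ (Finset.univ.filter (fun j => c j ≠ 0)).card := by
  classical
  apply Nat.sInf_le
  refine ⟨Finset.univ.filter (fun j => c j ≠ 0), rfl, ?_⟩
  intro hli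
  rw [Fintype.linearIndependent_iff] at hli
  obtain ⟨j₀, hj₀⟩ := Function.ne_iff.mp hc
  have hj₀mem : j₀ ∈ Finset.univ.filter (fun j => c j ≠ 0) := by
    simp only [Finset.mem_filter, Finset.mem_univ, true_and]
    simpa using hj₀
  have hsum : (∑ j : (Finset.univ.filter (fun j => c j ≠ 0) : Finset (Fin M)),
      c j • (fun i => Φ i (j : Fin M))) = 0 := by
    funext i
    have h1 : (∑ j : (Finset.univ.filter (fun j => c j ≠ 0) : Finset (Fin M)),
        c j • (fun i => Φ i (j : Fin M))) i
        = ∑ j ∈ Finset.univ.filter (fun j => c j ≠ 0), c j * Φ i j := by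
      rw [Finset.sum_apply]
      rw [← Finset.sum_coe_sort (Finset.univ.filter (fun j => c j ≠ 0))
        (fun j => c j * Φ i j)]
      simp
    rw [h1]
    have h2 : ∑ j ∈ Finset.univ.filter (fun j => c j ≠ 0), c j * Φ i j
        = ∑ j : Fin M, c j * Φ i j := by
      apply Finset.sum_subset (Finset.subset_univ _)
      intro x _ hx
      simp only [Finset.mem_filter, Finset.mem_univ, true_and, not_not] at hx
      simp [hx]
    rw [h2]
    have h3 : ∑ j : Fin M, c j * Φ i j = Φ.mulVec c i := by
      simp [Matrix.mulVec, dotProduct, mul_comm]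
    rw [h3, h, Pi.zero_apply]
  exact absurd (hli (fun j => c (j : Fin M)) hsum ⟨j₀, hj₀mem⟩) (by simpa using hj₀)

lemma exists_small_support {M : ℕ} (t : ℕ) :
    ∀ (T : Finset (Fin M)) (K : Submodule ℂ (Fin M → ℂ)),
      (∀ f ∈ K, ∀ i, f i ≠ 0 → i ∈ T) → t + 1 ≤ Module.finrank ℂ K →
      ∃ f ∈ K, f ≠ 0 ∧ (Finset.univ.filter (fun i => f i ≠ 0)).card + t ≤ T.card := by
  classical
  induction t with
  | zero =>
    intro T K hsupp hrank
    have h0 : 0 < Module.finrank ℂ ↥K := by omega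
    have hnt : Nontrivial ↥K := Module.finrank_pos_iff.mp h0
    obtain ⟨f, hf⟩ := exists_ne (0 : K)
    have hfne : (f : Fin M → ℂ) ≠ 0 := fun h0 => hf (Subtype.ext h0)
    refine ⟨f.1, f.2, hfne, ?_⟩
    simpa using Finset.card_le_card (fun i hi => hsupp f.1 f.2 i (by
      simpa using hi))
  | succ t ih =>
    intro T K hsupp hrank
    have h0 : 0 < Module.finrank ℂ ↥K := by omega
    have hnt : Nontrivial ↥K := Module.finrank_pos_iff.mp h0
    obtain ⟨f₀, hf₀⟩ := exists_ne (0 : K)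
    have hf₀' : (f₀ : Fin M → ℂ) ≠ 0 := fun h0 => hf₀ (Subtype.ext h0)
    obtain ⟨i, hi⟩ := Function.ne_iff.mp hf₀'
    have hiT : i ∈ T := hsupp f₀.1 f₀.2 i (by simpa using hi)
    set H := LinearMap.ker (LinearMap.proj i : (Fin M → ℂ) →ₗ[ℂ] ℂ) with hH
    have hM : Module.finrank ℂ (Fin M → ℂ) = M := by
      simp [Module.finrank_pi]
    have h1 := Submodule.finrank_sup_add_finrank_inf_eq K H
    have h2 : Module.finrank ℂ ↥(K ⊔ H) ≤ M := by
      have := Submodule.finrank_le (K ⊔ H)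
      omega
    have h3 : M ≤ Module.finrank ℂ ↥H + 1 := by
      have h4 := LinearMap.finrank_range_add_finrank_ker
        (LinearMap.proj i : (Fin M → ℂ) →ₗ[ℂ] ℂ)
      have h5 : Module.finrank ℂ
          ↥(LinearMap.range (LinearMap.proj i : (Fin M → ℂ) →ₗ[ℂ] ℂ)) ≤ 1 := by
        have := Submodule.finrank_le
          (LinearMap.range (LinearMap.proj i : (Fin M → ℂ) →ₗ[ℂ] ℂ))
        simpa using this
      rw [hM, ← hH] at h4
      omega
    have hrk' : t + 1 ≤ Module.finrank ℂ ↥(K ⊓ H) := by omega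
    have hsupp' : ∀ f ∈ K ⊓ H, ∀ j, f j ≠ 0 → j ∈ T.erase i := by
      intro f hf j hj
      obtain ⟨hfK, hfH⟩ := Submodule.mem_inf.mp hf
      refine Finset.mem_erase.mpr ⟨?_, hsupp f hfK j hj⟩
      rintro rfl
      exact hj (by simpa using LinearMap.mem_ker.mp hfH)
    obtain ⟨f, hfK, hfne, hcard⟩ := ih (T.erase i) (K ⊓ H) hsupp' hrk'
    have hce := Finset.card_erase_of_mem hiT
    have hT1 : 1 ≤ T.card := Finset.card_pos.mpr ⟨i, hiT⟩
    exact ⟨f, (Submodule.mem_inf.mp hfK).1, hfne, by omega⟩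

lemma matrix_rank_add_le {m n : ℕ} (A B : Matrix (Fin m) (Fin n) ℂ) :
    (A + B).rank ≤ A.rank + B.rank := by
  have hr : LinearMap.range (A + B).mulVecLin
      ≤ LinearMap.range A.mulVecLin ⊔ LinearMap.range B.mulVecLin := by
    rintro x ⟨c, rfl⟩
    have : (A + B).mulVecLin c = A.mulVec c + B.mulVec c := by
      simp [Matrix.mulVecLin_apply, Matrix.add_mulVec]
    rw [this]
    exact Submodule.add_mem_sup ⟨c, rfl⟩ ⟨c, rfl⟩
  have h1 : (A + B).rank ≤ Module.finrank ℂ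
      ↥(LinearMap.range A.mulVecLin ⊔ LinearMap.range B.mulVecLin) :=
    Submodule.finrank_mono hr
  have h2 := Submodule.finrank_sup_add_finrank_inf_eq
    (LinearMap.range A.mulVecLin) (LinearMap.range B.mulVecLin)
  have h3 : A.rank = Module.finrank ℂ ↥(LinearMap.range A.mulVecLin) := rfl
  have h4 : B.rank = Module.finrank ℂ ↥(LinearMap.range B.mulVecLin) := rfl
  omega

lemma rank_le_rowsupp {m l : ℕ} (A : Matrix (Fin m) (Fin l) ℂ) (s : Finset (Fin m))
    (h : ∀ i ∉ s, ∀ j, A i j = 0) : A.rank ≤ s.card := by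
  classical
  have hA : A = (Matrix.diagonal (fun i => if i ∈ s then (1:ℂ) else 0)) * A := by
    ext i j
    rw [Matrix.diagonal_mul]
    by_cases hi : i ∈ s
    · simp [hi]
    · simp [hi, h i hi j]
  have h1 : A.rank ≤ (Matrix.diagonal (fun i => if i ∈ s then (1:ℂ) else 0)).rank := by
    conv_lhs => rw [hA]
    exact Matrix.rank_mul_le_left _ _
  have h2 : (Matrix.diagonal (fun i => if i ∈ s then (1:ℂ) else 0)).rank = s.card := by
    rw [Matrix.rank_diagonal]
    have e : {i // (if i ∈ s then (1:ℂ) else 0) ≠ 0} ≃ {i // i ∈ s} :=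
      Equiv.subtypeEquivRight (fun i => by by_cases h : i ∈ s <;> simp [h])
    rw [Fintype.card_congr e, Fintype.card_coe]
  omega

/-- Theorem 1, uniqueness part: if `F` has row support of cardinality `S`,
`D̃ = Φ₁ F`, and `2S < spark(Φ₁) - 1 + rank(D̃)`, then any `X` with `Φ₁ X = D̃` and at
most `S` nonzero rows equals `X = F`. -/
theorem mmv_uniqueness {D M L S : ℕ}
    (Φ₁ : Matrix (Fin D) (Fin M) ℂ) (F : Matrix (Fin M) (Fin L) ℂ)
    (hF : Set.ncard {i : Fin M | ∃ j, F i j ≠ 0} = S)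
    (D' : Matrix (Fin D) (Fin L) ℂ) (hD : D' = Φ₁ * F)
    (hcond : 2 * S < spark Φ₁ - 1 + D'.rank) :
    ∀ X : Matrix (Fin M) (Fin L) ℂ,
      Φ₁ * X = D' → Set.ncard {i : Fin M | ∃ j, X i j ≠ 0} ≤ S → X = F := by
  classical
  intro X hX hXsupp
  by_contra hne
  set Z := F - X with hZdef
  have hZ : Z ≠ 0 := sub_ne_zero.mpr (Ne.symm hne)
  have hΦZ : Φ₁ * Z = 0 := by
    rw [hZdef, Matrix.mul_sub, ← hD, hX, sub_self]
  set sF := Finset.univ.filter (fun i => ∃ j, F i j ≠ 0) with hsFdef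
  set sX := Finset.univ.filter (fun i => ∃ j, X i j ≠ 0) with hsXdef
  set sZ := Finset.univ.filter (fun i => ∃ j, Z i j ≠ 0) with hsZdef
  have hcF : sF.card = S := by
    rw [← hF, Set.ncard_eq_toFinset_card', Set.toFinset_setOf]
  have hcX : sX.card ≤ S := by
    rwa [Set.ncard_eq_toFinset_card', Set.toFinset_setOf] at hXsupp
  have hXzero : ∀ i ∉ sX, ∀ j, X i j = 0 := by
    intro i hi j
    by_contra hx
    exact hi (by simp only [hsXdef, Finset.mem_filter, Finset.mem_univ, true_and]; exact ⟨j, hx⟩)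
  have hFzero : ∀ i ∉ sF, ∀ j, F i j = 0 := by
    intro i hi j
    by_contra hx
    exact hi (by simp only [hsFdef, Finset.mem_filter, Finset.mem_univ, true_and]; exact ⟨j, hx⟩)
  have hZzero : ∀ i ∉ sZ, ∀ j, Z i j = 0 := by
    intro i hi j
    by_contra hx
    exact hi (by simp only [hsZdef, Finset.mem_filter, Finset.mem_univ, true_and]; exact ⟨j, hx⟩)
  set e : Fin M → ℂ := fun i => if i ∈ sX then 1 else 0 with hedef
  set ec : Fin M → ℂ := fun i => if i ∈ sX then 0 else 1 with hecdef
  have hsplit : F = Matrix.diagonal e * F + Matrix.diagonal ec * F := by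
    ext i j
    rw [Matrix.add_apply, Matrix.diagonal_mul, Matrix.diagonal_mul]
    by_cases h : i ∈ sX <;> simp [hedef, hecdef, h]
  have hrF : F.rank ≤ (Matrix.diagonal e * F).rank + (Matrix.diagonal ec * F).rank := by
    conv_lhs => rw [hsplit]
    exact matrix_rank_add_le _ _
  have hA : (Matrix.diagonal e * F).rank ≤ (sF ∩ sX).card := by
    apply rank_le_rowsupp
    intro i hi j
    rw [Matrix.diagonal_mul]
    by_cases hiX : i ∈ sX
    · have hiF : i ∉ sF := fun hiF => hi (Finset.mem_inter.mpr ⟨hiF, hiX⟩)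
      simp [hFzero i hiF j]
    · simp [hedef, hiX]
  have hBZ : Matrix.diagonal ec * F = Matrix.diagonal ec * Z := by
    ext i j
    rw [Matrix.diagonal_mul, Matrix.diagonal_mul, hZdef, Matrix.sub_apply]
    by_cases h : i ∈ sX
    · simp [hecdef, h]
    · simp [hecdef, h, hXzero i h j]
  have hB : (Matrix.diagonal ec * F).rank ≤ Z.rank := by
    rw [hBZ]; exact Matrix.rank_mul_le_right _ _
  have hrD : D'.rank ≤ F.rank := by
    rw [hD]; exact Matrix.rank_mul_le_right _ _
  have hrDS : D'.rank ≤ S := by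
    have := rank_le_rowsupp F sF hFzero
    omega
  set K := LinearMap.range Z.mulVecLin with hKdef
  have hKsupp : ∀ f ∈ K, ∀ i, f i ≠ 0 → i ∈ sZ := by
    rintro f ⟨c, rfl⟩ i hi
    by_contra hz
    apply hi
    show Z.mulVec c i = 0
    simp only [Matrix.mulVec, dotProduct]
    apply Finset.sum_eq_zero
    intro j _
    rw [hZzero i hz j, zero_mul]
  have hKker : ∀ f ∈ K, Φ₁.mulVec f = 0 := by
    rintro f ⟨c, rfl⟩
    show Φ₁.mulVec (Z.mulVec c) = 0
    rw [Matrix.mulVec_mulVec, hΦZ, Matrix.zero_mulVec]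
  have hfr : Module.finrank ℂ ↥K = Z.rank := rfl
  have ht1 : 1 ≤ Z.rank := by
    obtain ⟨i, j, hij⟩ : ∃ i j, Z i j ≠ 0 := by
      by_contra h
      push_neg at h
      exact hZ (by ext i j; simp [h])
    have hmem : Z.mulVec (Pi.single j 1) ∈ K := ⟨Pi.single j 1, rfl⟩
    have hne0 : Z.mulVec (Pi.single j 1) ≠ 0 := by
      intro h0
      have := congrFun h0 i
      rw [Matrix.mulVec_single] at this
      simp only [mul_one, Pi.zero_apply] at this
      exact hij (by simpa using this)
    have hntK : Nontrivial K :=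
      ⟨⟨_, hmem⟩, 0, fun h0 => hne0 (congrArg Subtype.val h0)⟩
    have := (Module.finrank_pos_iff (R := ℂ) (M := ↥K)).mpr hntK
    omega
  obtain ⟨w, hwK, hwne, hwcard⟩ :=
    exists_small_support (Z.rank - 1) sZ K hKsupp (by omega)
  have hspark := spark_le_of_kernel Φ₁ w hwne (hKker w hwK)
  have hZsub : sZ ⊆ sF ∪ sX := by
    intro i hi
    obtain ⟨-, j, hj⟩ := Finset.mem_filter.mp hi
    rw [hZdef, Matrix.sub_apply] at hj
    rw [Finset.mem_union]
    by_cases hFi : F i j = 0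
    · right
      refine Finset.mem_filter.mpr ⟨Finset.mem_univ _, ⟨j, ?_⟩⟩
      intro hx
      exact hj (by rw [hFi, hx, sub_zero])
    · left
      exact Finset.mem_filter.mpr ⟨Finset.mem_univ _, ⟨j, hFi⟩⟩
  have hunion := Finset.card_union_add_card_inter sF sX
  have hle := Finset.card_le_card hZsub
  have hrank_r : D'.rank ≤ (sF ∩ sX).card + Z.rank := by omega
  omega
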